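/- arXiv:2312.07673 — 2 statements merged into one kernel-verified Lean document; each statement's English description precedes it below -/
import Mathlib

section
/- Let ĝ, g̃, g ∈ ℝⁿ with ‖ĝ − g̃‖ ≤ u‖ĝ‖, ‖g̃‖ ≥ (1−u)‖ĝ‖ > 0, ‖g − ĝ‖ ≤ ω‖ĝ‖, let ϑ be real with |ϑ| ≤ γ < 1, σ > 0, ŝ = −g̃/σ, and ΔT̂ = (‖g̃‖²/σ)(1+ϑ) > 0. Then |g̃ᵀŝ(1+ϑ) − gᵀŝ| / ΔT̂ ≤ (u + γα + αω)/(1−u), where α = 1/(1−γ). -/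
theorem stmt_11 (n : ℕ) (ghat gtil g : EuclideanSpace ℝ (Fin n))
    (u ω γ ϑ σ ΔT : ℝ)
    (hu0 : 0 ≤ u) (hu1 : u < 1) (hω : 0 ≤ ω) (hγ0 : 0 ≤ γ) (hγ1 : γ < 1)
    (hϑ : |ϑ| ≤ γ) (hσ : 0 < σ)
    (h1 : ‖ghat - gtil‖ ≤ u * ‖ghat‖)
    (h2 : ‖gtil‖ ≥ (1 - u) * ‖ghat‖) (h3 : 0 < ‖ghat‖)
    (h4 : ‖g - ghat‖ ≤ ω * ‖ghat‖)
    (shat : EuclideanSpace ℝ (Fin n)) (hshat : shat = -(σ⁻¹ • gtil))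
    (hΔT : ΔT = ‖gtil‖^2 / σ * (1 + ϑ)) (hΔTpos : 0 < ΔT) :
    |(inner ℝ gtil shat : ℝ) * (1 + ϑ) - (inner ℝ g shat : ℝ)| / ΔT ≤
      (u + γ * (1 / (1 - γ)) + (1 / (1 - γ)) * ω) / (1 - u) := by
  have hγ' : (0:ℝ) < 1 - γ := by linarith
  have hu' : (0:ℝ) < 1 - u := by linarith
  have hc : 0 < ‖gtil‖ := lt_of_lt_of_le (by nlinarith) h2
  have hϑ1 : 1 - γ ≤ 1 + ϑ := by
    have := abs_le.mp hϑ; linarith [this.1]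
  set c := ‖gtil‖ with hcdef
  set X : ℝ := inner ℝ (g - gtil) gtil - ϑ * c^2 with hX
  have hinner1 : (inner ℝ gtil shat : ℝ) = -(σ⁻¹ * c^2) := by
    rw [hshat, inner_neg_right, real_inner_smul_right, real_inner_self_eq_norm_sq]
  have hinner2 : (inner ℝ g shat : ℝ) = -(σ⁻¹ * (inner ℝ g gtil : ℝ)) := by
    rw [hshat, inner_neg_right, real_inner_smul_right]
  have hsub : (inner ℝ (g - gtil) gtil : ℝ) = (inner ℝ g gtil : ℝ) - c^2 := by
    rw [inner_sub_left, real_inner_self_eq_norm_sq]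
  have hexpr : (inner ℝ gtil shat : ℝ) * (1 + ϑ) - (inner ℝ g shat : ℝ) = σ⁻¹ * X := by
    rw [hinner1, hinner2, hX, hsub]; ring
  -- bound |X|
  have hgg : ‖g - gtil‖ ≤ (ω + u) * ‖ghat‖ := by
    calc ‖g - gtil‖ = ‖(g - ghat) + (ghat - gtil)‖ := by abel_nf
    _ ≤ ‖g - ghat‖ + ‖ghat - gtil‖ := norm_add_le _ _
    _ ≤ (ω + u) * ‖ghat‖ := by linarith
  have hXb : |X| ≤ (ω + u) * ‖ghat‖ * c + γ * c^2 := by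
    have h5 : |(inner ℝ (g - gtil) gtil : ℝ)| ≤ (ω + u) * ‖ghat‖ * c := by
      refine le_trans (abs_real_inner_le_norm _ _) ?_
      exact mul_le_mul_of_nonneg_right hgg hc.le
    have h6 : |ϑ * c^2| ≤ γ * c^2 := by
      rw [abs_mul, abs_of_nonneg (sq_nonneg c)]
      exact mul_le_mul_of_nonneg_right hϑ (sq_nonneg c)
    calc |X| ≤ |(inner ℝ (g - gtil) gtil : ℝ)| + |ϑ * c^2| := abs_sub _ _
    _ ≤ _ := by linarith
  have main : |X| * (1 - u) ≤ (u + γ * (1 / (1 - γ)) + (1 / (1 - γ)) * ω) * (c^2 * (1 + ϑ)) := by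
    have e : (u + γ * (1 / (1 - γ)) + (1 / (1 - γ)) * ω) = (u*(1-γ) + γ + ω) / (1-γ) := by
      field_simp
    rw [e, div_mul_eq_mul_div, le_div_iff₀ hγ']
    nlinarith [mul_le_mul_of_nonneg_right hXb (mul_nonneg hu'.le hγ'.le),
      mul_le_mul_of_nonneg_left h2 (by positivity :
        (0:ℝ) ≤ (ω+u) * c * (1-γ)),
      mul_le_mul_of_nonneg_left hϑ1 (by positivity :
        (0:ℝ) ≤ (ω + u + γ*(1-u)) * c^2)]
  rw [hexpr, abs_mul, abs_of_nonneg (inv_nonneg.mpr hσ.le),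
    div_le_div_iff₀ hΔTpos hu', hΔT]
  calc σ⁻¹ * |X| * (1 - u) = σ⁻¹ * (|X| * (1 - u)) := by ring
    _ ≤ σ⁻¹ * ((u + γ * (1 / (1 - γ)) + (1 / (1 - γ)) * ω) * (c^2 * (1 + ϑ))) :=
        mul_le_mul_of_nonneg_left main (inv_nonneg.mpr hσ.le)
    _ = (u + γ * (1 / (1 - γ)) + (1 / (1 - γ)) * ω) * (c ^ 2 / σ * (1 + ϑ)) := by ring
end

section
/- Suppose a positive sequence (σₖ) satisfies: σ_{k+1} ≥ γ₁σₖ when iteration k is successful and σ_{k+1} ≥ γ₂σₖ when unsuccessful, with 0 < γ₁ < 1 < γ₂, and σₖ ≤ σ_max for all k ≤ K with σ₀ > 0. Let S be the number of successful iterations among 0,…,K−1 and U = K − S the number of unsuccessful ones. Then K ≤ S(1 + |log γ₁|/log γ₂) + (1/log γ₂)·log(σ_max/σ₀). -/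
theorem stmt_13 (K : ℕ) (σ : ℕ → ℝ) (succ : ℕ → Prop) [DecidablePred succ]
    (γ₁ γ₂ σmax : ℝ)
    (hγ₁0 : 0 < γ₁) (hγ₁1 : γ₁ < 1) (hγ₂ : 1 < γ₂)
    (hσpos : ∀ k ≤ K, 0 < σ k)
    (hsucc : ∀ k < K, succ k → σ (k + 1) ≥ γ₁ * σ k)
    (hfail : ∀ k < K, ¬ succ k → σ (k + 1) ≥ γ₂ * σ k)
    (hmax : ∀ k ≤ K, σ k ≤ σmax) :
    (K : ℝ) ≤ ((Finset.range K).filter succ).card *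
        (1 + |Real.log γ₁| / Real.log γ₂) +
      (1 / Real.log γ₂) * Real.log (σmax / σ 0) := by
  have hγ₂0 : (0:ℝ) < γ₂ := lt_trans one_pos hγ₂
  have hσ0 : 0 < σ 0 := hσpos 0 (Nat.zero_le _)
  have cardle : ∀ k : ℕ, ((Finset.range k).filter succ).card ≤ k := fun k =>
    le_trans (Finset.card_filter_le _ _) (by simp)
  have key : ∀ k, k ≤ K → σ 0 * γ₁ ^ ((Finset.range k).filter succ).card *
      γ₂ ^ (k - ((Finset.range k).filter succ).card) ≤ σ k := by
    intro k hk
    induction k with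
    | zero => simp
    | succ n ih =>
      have hn : n < K := hk
      have ihn := ih (le_of_lt hn)
      by_cases hs : succ n
      · have hcard : ((Finset.range (n+1)).filter succ).card
            = ((Finset.range n).filter succ).card + 1 := by
          rw [Finset.range_add_one, Finset.filter_insert, if_pos hs,
            Finset.card_insert_of_notMem (by simp)]
        rw [hcard]
        have hsub : n + 1 - (((Finset.range n).filter succ).card + 1)
            = n - ((Finset.range n).filter succ).card := by omega
        rw [hsub, pow_succ]
        calc σ 0 * (γ₁ ^ ((Finset.range n).filter succ).card * γ₁) *
              γ₂ ^ (n - ((Finset.range n).filter succ).card)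
            = γ₁ * (σ 0 * γ₁ ^ ((Finset.range n).filter succ).card *
              γ₂ ^ (n - ((Finset.range n).filter succ).card)) := by ring
          _ ≤ γ₁ * σ n := by
              exact mul_le_mul_of_nonneg_left ihn (le_of_lt hγ₁0)
          _ ≤ σ (n+1) := hsucc n hn hs
      · have hcard : ((Finset.range (n+1)).filter succ).card
            = ((Finset.range n).filter succ).card := by
          rw [Finset.range_add_one, Finset.filter_insert, if_neg hs]
        rw [hcard]
        have hsub : n + 1 - ((Finset.range n).filter succ).card
            = (n - ((Finset.range n).filter succ).card) + 1 := by
          have := cardle n; omega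
        rw [hsub, pow_succ]
        calc σ 0 * γ₁ ^ ((Finset.range n).filter succ).card *
              (γ₂ ^ (n - ((Finset.range n).filter succ).card) * γ₂)
            = γ₂ * (σ 0 * γ₁ ^ ((Finset.range n).filter succ).card *
              γ₂ ^ (n - ((Finset.range n).filter succ).card)) := by ring
          _ ≤ γ₂ * σ n := mul_le_mul_of_nonneg_left ihn (le_of_lt hγ₂0)
          _ ≤ σ (n+1) := hfail n hn hs
  set S := ((Finset.range K).filter succ).card with hS
  have hSK : S ≤ K := cardle K
  have hkey := key K le_rfl
  have hmaxK := hmax K le_rfl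
  have hprod : σ 0 * γ₁ ^ S * γ₂ ^ (K - S) ≤ σmax := le_trans hkey hmaxK
  have hprodpos : 0 < σ 0 * γ₁ ^ S * γ₂ ^ (K - S) := by positivity
  have hlog := Real.log_le_log (by positivity) hprod
  rw [Real.log_mul (by positivity) (by positivity),
    Real.log_mul (ne_of_gt hσ0) (by positivity),
    Real.log_pow, Real.log_pow] at hlog
  have hlγ₂ : 0 < Real.log γ₂ := Real.log_pos hγ₂
  have hlγ₁ : Real.log γ₁ < 0 := Real.log_neg hγ₁0 hγ₁1
  have habs : |Real.log γ₁| = -Real.log γ₁ := abs_of_neg hlγ₁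
  have hU : ((K - S : ℕ) : ℝ) = (K : ℝ) - (S : ℝ) := by
    push_cast [Nat.cast_sub hSK]; ring
  rw [hU] at hlog
  have hdiv : Real.log (σmax / σ 0) = Real.log σmax - Real.log (σ 0) := by
    rw [Real.log_div (ne_of_gt (lt_of_lt_of_le (hσpos K le_rfl) hmaxK)) (ne_of_gt hσ0)]
  rw [hdiv, habs, ← mul_le_mul_iff_of_pos_right hlγ₂]
  have hexp : ((S : ℝ) * (1 + -Real.log γ₁ / Real.log γ₂) +
      1 / Real.log γ₂ * (Real.log σmax - Real.log (σ 0))) * Real.log γ₂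
      = (S : ℝ) * Real.log γ₂ - (S : ℝ) * Real.log γ₁ +
        (Real.log σmax - Real.log (σ 0)) := by
    field_simp
    ring
  rw [hexp]
  linarith
end
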